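/- (Lemma 2 of the paper.) Let ρ be a density matrix on (Fin dA × Fin dB), and let hΦ : (Φ_A(ρ)).IsHermitian. Then for every function f : ℝ → ℝ, trace(ρ * (hΦ.cfc f)) = trace(Φ_A(ρ) * (hΦ.cfc f)), where Matrix.IsHermitian.cfc applies f to the eigenvalues of the Hermitian matrix Φ_A(ρ). -/

import Mathlib

open Matrix Kronecker BigOperators
open scoped ComplexOrder

/-- The unrevealed-measurement (pinching) map on the bipartite system:
`Φ_A(ρ) = ∑ i, (A i ⊗ₖ 1) * ρ * (A i ⊗ₖ 1)`. -/
noncomputable def pinch {dA dB : ℕ} {ι : Type*} [Fintype ι]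
    (A : ι → Matrix (Fin dA) (Fin dA) ℂ)
    (ρ : Matrix (Fin dA × Fin dB) (Fin dA × Fin dB) ℂ) :
    Matrix (Fin dA × Fin dB) (Fin dA × Fin dB) ℂ :=
  ∑ i, ((A i) ⊗ₖ (1 : Matrix (Fin dB) (Fin dB) ℂ)) * ρ *
    ((A i) ⊗ₖ (1 : Matrix (Fin dB) (Fin dB) ℂ))

section Aux
open Polynomial

lemma commute_aeval_aux {n : Type*} [Fintype n] [DecidableEq n]
    {a b : Matrix n n ℂ} (h : Commute b a) (q : ℝ[X]) :
    Commute b (aeval a q) := by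
  induction q using Polynomial.induction_on with
  | C r => simpa [Commute, SemiconjBy] using (Algebra.commutes r b).symm
  | add q₁ q₂ h₁ h₂ => simpa [map_add] using h₁.add_right h₂
  | monomial m r hm =>
    simp only [_root_.map_mul, map_pow, aeval_C, aeval_X]
    exact (Commute.symm (Algebra.commutes r b)).mul_right (h.pow_right _)

lemma commute_cfc_aux {n : Type*} [Fintype n] [DecidableEq n]
    {a b : Matrix n n ℂ} (ha : a.IsHermitian) (h : Commute b a) (f : ℝ → ℝ) :
    Commute b (cfc f a) := by
  classical
  set s := (Matrix.finite_real_spectrum (A := a)).toFinset with hs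
  set q := Lagrange.interpolate s id f with hqdef
  have hq : Set.EqOn f q.eval (spectrum ℝ a) := fun x hx => by
    show f x = q.eval x
    rw [hqdef]
    exact (Lagrange.eval_interpolate_at_node _ (Set.injOn_id _)
      (by simpa [hs] using hx)).symm
  have ha' : IsSelfAdjoint a := ha
  rw [cfc_congr hq, cfc_polynomial q a]
  exact commute_aeval_aux h q

end Aux

/-- Lemma 2 of the paper: for a density matrix `ρ` and any function `f`,
`Tr(ρ f(Φ_A(ρ))) = Tr(Φ_A(ρ) f(Φ_A(ρ)))`. -/
theorem trace_fun_pinch {dA dB : ℕ} {ι : Type*} [Fintype ι] [DecidableEq ι]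
    (A : ι → Matrix (Fin dA) (Fin dA) ℂ)
    (hproj : ∀ i j, A i * A j = if i = j then A i else 0)
    (hherm : ∀ i, (A i)ᴴ = A i)
    (hsum : ∑ i, A i = 1)
    (ρ : Matrix (Fin dA × Fin dB) (Fin dA × Fin dB) ℂ)
    (hρ : ρ.PosSemidef) (htr : ρ.trace = 1)
    (hΦ : (pinch A ρ).IsHermitian)
    (f : ℝ → ℝ) :
    (ρ * hΦ.cfc f).trace = (pinch A ρ * hΦ.cfc f).trace := by
  classical
  set P : ι → Matrix (Fin dA × Fin dB) (Fin dA × Fin dB) ℂ :=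
    fun i => (A i) ⊗ₖ (1 : Matrix (Fin dB) (Fin dB) ℂ) with hPdef
  have hP : ∀ i j, P i * P j = if i = j then P i else 0 := by
    intro i j
    simp only [hPdef, ← Matrix.mul_kronecker_mul, one_mul, hproj i j]
    split <;> simp [Matrix.zero_kronecker]
  have hPsum : ∑ i, P i = 1 := by
    simp only [hPdef]
    have : ∑ i, (A i) ⊗ₖ (1 : Matrix (Fin dB) (Fin dB) ℂ)
        = (∑ i, A i) ⊗ₖ (1 : Matrix (Fin dB) (Fin dB) ℂ) := by
      ext ⟨a, b⟩ ⟨c, d⟩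
      simp [Matrix.kroneckerMap_apply, Matrix.sum_apply, Finset.sum_mul]
    rw [this, hsum, Matrix.one_kronecker_one]
  have hcomm : ∀ j, Commute (P j) (pinch A ρ) := by
    intro j
    have h1 : P j * pinch A ρ = P j * ρ * P j := by
      rw [pinch, Finset.mul_sum]
      rw [Finset.sum_eq_single j]
      · rw [← mul_assoc, ← mul_assoc, hP j j]; simp; rfl
      · intro i _ hij
        rw [← mul_assoc, ← mul_assoc, hP j i, if_neg (by exact fun h => hij h.symm)]
        simp
      · intro h; exact absurd (Finset.mem_univ j) h
    have h2 : pinch A ρ * P j = P j * ρ * P j := by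
      rw [pinch, Finset.sum_mul]
      rw [Finset.sum_eq_single j]
      · rw [mul_assoc, hP j j]; simp [mul_assoc]; rfl
      · intro i _ hij
        rw [mul_assoc, hP i j, if_neg hij]; simp
      · intro h; exact absurd (Finset.mem_univ j) h
    rw [Commute, SemiconjBy, h1, h2]
  set M := hΦ.cfc f with hMdef
  have hM : M = cfc f (pinch A ρ) := (hΦ.cfc_eq f).symm ▸ rfl
  have hcommM : ∀ j, Commute (P j) M := by
    intro j
    rw [hM]
    exact commute_cfc_aux hΦ (hcomm j) f
  rw [pinch, Finset.sum_mul, Matrix.trace_sum]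
  have hterm : ∀ i, (P i * ρ * P i * M).trace = (ρ * M * P i).trace := by
    intro i
    have : P i * ρ * P i * M = P i * (ρ * M * P i) := by
      rw [mul_assoc (P i * ρ), (hcommM i).eq]
      simp only [mul_assoc]
    rw [this, Matrix.trace_mul_comm, mul_assoc, mul_assoc, hP i i, if_pos rfl, ← mul_assoc]
  rw [Finset.sum_congr rfl (fun i _ => hterm i), ← Matrix.trace_sum, ← Finset.mul_sum, hPsum,
    mul_one]
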